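/- Let R ⊆ ℤ \ {0} be a finite set, let q ≥ 2, and let (c_n)_{n≥1} be a sequence of real numbers such that for every n ≥ 1, every storage code on the finite directed graph Z_{R,n} over an alphabet of size q has rate at most c_n. Then every R-recoverable system X over an alphabet of size q satisfies R_q(X) ≤ limsup_{n→∞} c_n. -/

import Mathlib

def IsStorageCode {V Q : Type*} (E : V → V → Prop) (C : Set (V → Q)) : Prop :=
  ∀ v : V, ∃ f : (V → Q) → Q,
    (∀ x y : V → Q, (∀ u : V, E v u → x u = y u) → f x = f y) ∧
    ∀ x ∈ C, f x = x v

/-- An `R`-recoverable system on `ℤ`: every symbol `x_i` is a function of the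
symbols in positions `i + R`. -/
def IsRecoverable {Q : Type*} (R : Set ℤ) (X : Set (ℤ → Q)) : Prop :=
  ∀ i : ℤ, ∃ f : (ℤ → Q) → Q,
    (∀ x y : ℤ → Q, (∀ j ∈ R, x (i + j) = y (i + j)) → f x = f y) ∧
    ∀ x ∈ X, f x = x i

/-- `|B_n(X)|`: the number of restrictions of elements of `X` to `{0, …, n−1}`. -/
noncomputable def blockCount {Q : Type*} (X : Set (ℤ → Q)) (n : ℕ) : ℕ :=
  Nat.card ↥((fun x : ℤ → Q => fun i : Fin n => x ((i : ℕ) : ℤ)) '' X)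

/-- The rate `R_q(X) = limsup (1/n) log_q |B_n(X)|` (computed in `EReal`). -/
noncomputable def erate (q : ℕ) {Q : Type*} (X : Set (ℤ → Q)) : EReal :=
  Filter.limsup (fun n : ℕ => ((Real.logb q (blockCount X n) / n : ℝ) : EReal)) Filter.atTop

/-- `Z_{R,n}`: the directed graph on `{0,…,n−1}` with an edge `i → j` iff `j − i ∈ R`. -/
def lineGraphRel (R : Set ℤ) (n : ℕ) : Fin n → Fin n → Prop :=
  fun i j => ((j : ℕ) : ℤ) - ((i : ℕ) : ℤ) ∈ R

section Aux

variable {Q : Type*}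

/-- boundary part of a block of length `n + 2m`. -/
def bdryF (m n : ℕ) (z : Fin (n + 2*m) → Q) (k : Fin (2*m)) : Q :=
  if h : (k : ℕ) < m then z ⟨k, by omega⟩
  else z ⟨n + k, by have := k.isLt; omega⟩

/-- middle part of a block of length `n + 2m`. -/
def midF (m n : ℕ) (z : Fin (n + 2*m) → Q) (i : Fin n) : Q :=
  z ⟨m + i, by have := i.isLt; omega⟩

/-- recombine boundary and middle parts. -/
def combF (m n : ℕ) (b : Fin (2*m) → Q) (y : Fin n → Q) (p : Fin (n + 2*m)) : Q :=
  if h : (p : ℕ) < m then b ⟨p, by omega⟩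
  else if h2 : (p : ℕ) < m + n then y ⟨(p : ℕ) - m, by omega⟩
  else b ⟨(p : ℕ) - n, by have := p.isLt; omega⟩

lemma comb_bdry_mid (m n : ℕ) (z : Fin (n + 2*m) → Q) :
    combF m n (bdryF m n z) (midF m n z) = z := by
  funext p
  unfold combF bdryF midF
  split_ifs with h1 h2 h3 h4 <;>
    simp only [Fin.val_mk] at * <;>
    first
      | omega
      | (congr 1; exact Fin.ext (by simp only [Fin.val_mk]; omega))

lemma combF_eq_of_agree (m n : ℕ) (b : Fin (2*m) → Q) (y y' : Fin n → Q)
    (p : Fin (n + 2*m)) (hout : ¬ (m ≤ (p : ℕ) ∧ (p : ℕ) < m + n)) :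
    combF m n b y p = combF m n b y' p := by
  unfold combF
  split_ifs <;> first | rfl | omega

lemma combF_mid (m n : ℕ) (b : Fin (2*m) → Q) (y : Fin n → Q)
    (p : Fin (n + 2*m)) (h1 : m ≤ (p : ℕ)) (h2 : (p : ℕ) < m + n) :
    combF m n b y p = y ⟨(p : ℕ) - m, by omega⟩ := by
  unfold combF
  split_ifs <;> first | rfl | omega

end Aux

lemma key_bound {Q : Type*} [Fintype Q] [Nonempty Q] (R : Set ℤ) (q : ℕ) (hq : 2 ≤ q)
    (hQ : Fintype.card Q = q) (m : ℕ) (hm : ∀ r ∈ R, r.natAbs ≤ m)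
    (X : Set (ℤ → Q)) (hX : IsRecoverable R X)
    (c : ℕ → ℝ)
    (hc : ∀ n : ℕ, 1 ≤ n → ∀ C : Finset (Fin n → Q),
      IsStorageCode (lineGraphRel R n) (↑C : Set (Fin n → Q)) →
      Real.logb q (C.card : ℝ) / n ≤ c n)
    (n : ℕ) (hn : 1 ≤ n) (hc0 : 0 ≤ c n) :
    Real.logb q (blockCount X (n + 2*m)) ≤ 2*m + n * c n := by
  classical
  inhabit Q
  have hq1 : (1 : ℝ) < (q : ℝ) := by exact_mod_cast hq.trans_lt' one_lt_two
  set res : (ℤ → Q) → (Fin (n + 2*m) → Q) :=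
    fun x => fun i : Fin (n + 2*m) => x ((i : ℕ) : ℤ) with hres
  have hBfin : (res '' X).Finite := Set.toFinite _
  set Bf : Finset (Fin (n + 2*m) → Q) := hBfin.toFinset with hBf
  have hBcard : blockCount X (n + 2*m) = Bf.card := by
    rw [blockCount, Nat.card_coe_set_eq, Set.ncard_eq_toFinset_card _ hBfin]
  -- the extension of a block to ℤ
  set extZ : (Fin (n + 2*m) → Q) → ℤ → Q :=
    fun w j => if h : 0 ≤ j ∧ j < ((n + 2*m : ℕ) : ℤ) then w ⟨j.toNat, by omega⟩
      else default with hextZ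
  set Cb : (Fin (2*m) → Q) → Finset (Fin n → Q) :=
    fun b => (Bf.filter (fun z => bdryF m n z = b)).image (midF m n) with hCb
  -- each Cb b is a storage code on Z_{R,n}
  have hstore : ∀ b, IsStorageCode (lineGraphRel R n) ((Cb b : Set (Fin n → Q))) := by
    intro b v
    obtain ⟨f, hfl, hfr⟩ := hX ((m : ℤ) + (v : ℕ))
    refine ⟨fun y => f (extZ (combF m n b y)), ?_, ?_⟩
    · intro y y' hyy'
      apply hfl
      intro r hr
      have hrm := hm r hr
      have hv := v.isLt
      have h0 : 0 ≤ (m : ℤ) + (v : ℕ) + r ∧ (m : ℤ) + (v : ℕ) + r < ((n + 2*m : ℕ) : ℤ) := by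
        constructor <;> omega
      simp only [extZ, dif_pos h0]
      set p : Fin (n + 2*m) := ⟨((m : ℤ) + (v : ℕ) + r).toNat, by omega⟩ with hp
      by_cases hmidp : m ≤ (p : ℕ) ∧ (p : ℕ) < m + n
      · rw [combF_mid m n b y p hmidp.1 hmidp.2, combF_mid m n b y' p hmidp.1 hmidp.2]
        apply hyy'
        show ((((p : ℕ) - m : ℕ) : ℤ) - ((v : ℕ) : ℤ)) ∈ R
        have hpv : (((p : ℕ) - m : ℕ) : ℤ) - ((v : ℕ) : ℤ) = r := by
          have : ((p : ℕ) : ℤ) = (m : ℤ) + (v : ℕ) + r := by simp [hp]; omega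
          omega
        rwa [hpv]
      · exact combF_eq_of_agree m n b y y' p hmidp
    · intro y hy
      simp only [hCb, Finset.coe_image, Set.mem_image, Finset.mem_coe, Finset.mem_filter] at hy
      obtain ⟨z, ⟨hzB, hzb⟩, hzy⟩ := hy
      have hzX : z ∈ res '' X := by rwa [hBf, Set.Finite.mem_toFinset] at hzB
      obtain ⟨x, hxX, hxz⟩ := hzX
      have hcomb : combF m n b y = z := by
        rw [← hzb, ← hzy]; exact comb_bdry_mid m n z
      show f (extZ (combF m n b y)) = y v
      rw [hcomb]
      have hev : f (extZ z) = f x := by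
        apply hfl
        intro r hr
        have hrm := hm r hr
        have hv := v.isLt
        have h0 : 0 ≤ (m : ℤ) + (v : ℕ) + r ∧ (m : ℤ) + (v : ℕ) + r < ((n + 2*m : ℕ) : ℤ) := by
          constructor <;> omega
        simp only [extZ, dif_pos h0]
        rw [← hxz]
        simp only [hres]
        congr 1
        omega
      rw [hev, hfr x hxX, ← hzy]
      simp only [midF, ← hxz, hres]
      exact congrArg x (by push_cast; ring)
  -- counting
  have hcount : Bf.card = ∑ b : Fin (2*m) → Q, (Cb b).card := by
    rw [Finset.card_eq_sum_card_fiberwise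
      (f := bdryF m n) (t := Finset.univ) (fun z _ => Finset.mem_univ _)]
    refine Finset.sum_congr rfl fun b _ => ?_
    rw [hCb]
    symm
    apply Finset.card_image_of_injOn
    intro z1 h1 z2 h2 hmideq
    rw [Finset.coe_filter, Set.mem_setOf_eq] at h1 h2
    have e1 := comb_bdry_mid m n z1
    have e2 := comb_bdry_mid m n z2
    rw [h1.2] at e1
    rw [h2.2] at e2
    rw [← e1, ← e2, hmideq]
  set D : ℕ := Finset.univ.sup (fun b : Fin (2*m) → Q => (Cb b).card) with hD
  have hsum : Bf.card ≤ q ^ (2*m) * D := by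
    rw [hcount]
    calc ∑ b : Fin (2*m) → Q, (Cb b).card
        ≤ (Finset.univ : Finset (Fin (2*m) → Q)).card • D := by
          apply Finset.sum_le_card_nsmul
          intro b _
          rw [hD]
          exact Finset.le_sup (f := fun b => (Cb b).card) (Finset.mem_univ b)
      _ = q ^ (2*m) * D := by
          rw [smul_eq_mul, Finset.card_univ, Fintype.card_fun, hQ, Fintype.card_fin]
  obtain ⟨bstar, -, hbstar⟩ :=
    Finset.exists_mem_eq_sup (Finset.univ : Finset (Fin (2*m) → Q))
      Finset.univ_nonempty (fun b => (Cb b).card)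
  have hDlog : Real.logb q (D : ℝ) ≤ n * c n := by
    have := hc n hn (Cb bstar) (hstore bstar)
    rw [div_le_iff₀ (by positivity : (0:ℝ) < (n:ℝ))] at this
    rw [hD, hbstar]
    linarith [this]
  by_cases hB0 : blockCount X (n + 2*m) = 0
  · rw [hB0]
    simp only [Nat.cast_zero, Real.logb_zero]
    positivity
  · have hB1 : 1 ≤ blockCount X (n + 2*m) := Nat.one_le_iff_ne_zero.mpr hB0
    have hD1 : 1 ≤ D := by
      rcases Nat.eq_zero_or_pos D with h0 | h0
      · rw [h0, Nat.mul_zero] at hsum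
        rw [hBcard] at hB1
        omega
      · exact h0
    have hmono : Real.logb q (blockCount X (n + 2*m) : ℝ) ≤
        Real.logb q ((q ^ (2*m) * D : ℕ) : ℝ) := by
      apply (Real.logb_le_logb hq1 (by exact_mod_cast hB1) ?_).mpr
      · exact_mod_cast hBcard ▸ hsum
      · have : 1 ≤ q ^ (2*m) * D := Nat.one_le_iff_ne_zero.mpr (by positivity)
        exact_mod_cast this
    refine hmono.trans ?_
    have : ((q ^ (2*m) * D : ℕ) : ℝ) = ((q:ℝ) ^ (2*m)) * (D : ℝ) := by push_cast; ring
    rw [this, Real.logb_mul (by positivity) (by exact_mod_cast Nat.one_le_iff_ne_zero.mp hD1),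
      Real.logb_pow, Real.logb_self_eq_one hq1]
    push_cast
    linarith [hDlog]

/-- If every storage code on `Z_{R,n}` over an alphabet of size `q` has rate at
most `c_n`, then every `R`-recoverable system `X` satisfies
`R_q(X) ≤ limsup c_n`. -/
theorem stmt6 (R : Set ℤ) (hRfin : R.Finite) (hR0 : (0 : ℤ) ∉ R)
    (q : ℕ) (hq : 2 ≤ q) (Q : Type*) [Fintype Q] (hQ : Fintype.card Q = q)
    (c : ℕ → ℝ)
    (hc : ∀ n : ℕ, 1 ≤ n → ∀ C : Finset (Fin n → Q),
      IsStorageCode (lineGraphRel R n) (↑C : Set (Fin n → Q)) →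
      Real.logb q (C.card : ℝ) / n ≤ c n)
    (X : Set (ℤ → Q)) (hX : IsRecoverable R X) :
    erate q X ≤ Filter.limsup (fun n : ℕ => ((c n : ℝ) : EReal)) Filter.atTop := by
  classical
  have hQne : Nonempty Q := by
    have : 0 < Fintype.card Q := by omega
    exact Fintype.card_pos_iff.mp this
  inhabit Q
  -- bound on R
  obtain ⟨m, hm⟩ : ∃ m : ℕ, ∀ r ∈ R, r.natAbs ≤ m := by
    obtain ⟨m, hm⟩ := (hRfin.image Int.natAbs).bddAbove
    exact ⟨m, fun r hr => hm (Set.mem_image_of_mem _ hr)⟩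
  -- c is nonnegative
  have hc0 : ∀ n : ℕ, 1 ≤ n → 0 ≤ c n := by
    intro n hn
    have := hc n hn ({fun _ => (default : Q)} : Finset (Fin n → Q)) ?_
    · simpa using this
    · intro v
      refine ⟨fun _ => (default : Q), fun _ _ _ => rfl, ?_⟩
      intro x hx
      simp only [Finset.coe_singleton, Set.mem_singleton_iff] at hx
      rw [hx]
  -- key bound
  have hkey : ∀ n : ℕ, 1 ≤ n →
      Real.logb q (blockCount X (n + 2*m)) ≤ 2*m + n * c n :=
    fun n hn => key_bound R q hq hQ m hm X hX c hc n hn (hc0 n hn)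
  -- eventual pointwise bound
  have hev : ∀ᶠ N : ℕ in Filter.atTop,
      ((Real.logb q (blockCount X N) / N : ℝ) : EReal) ≤
        ((2*m / N + c (N - 2*m) : ℝ) : EReal) := by
    filter_upwards [Filter.eventually_ge_atTop (2*m + 1)] with N hN
    rw [EReal.coe_le_coe_iff]
    set n := N - 2*m with hn
    have hn1 : 1 ≤ n := by omega
    have hNn : n + 2*m = N := by omega
    have hb := hkey n hn1
    rw [hNn] at hb
    have hNpos : (0:ℝ) < (N:ℝ) := by
      have : 0 < N := by omega
      exact_mod_cast this
    have h1 : Real.logb q (blockCount X N) / N ≤ (2*m + n * c n) / N :=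
      (div_le_div_iff_of_pos_right hNpos).mpr hb
    refine h1.trans ?_
    have hnN : (n:ℝ) ≤ (N:ℝ) := by
      have : n ≤ N := by omega
      exact_mod_cast this
    have hcn := hc0 n hn1
    have h2 : (n:ℝ) * c n / N ≤ c n := by
      rw [div_le_iff₀ hNpos]
      nlinarith
    calc (2*m + (n:ℝ) * c n) / N = 2*m/N + (n:ℝ)*c n/N := by ring
      _ ≤ 2*m/N + c n := by linarith
  -- pass to limsups
  rw [erate]
  refine (Filter.limsup_le_limsup hev).trans ?_
  have hsplit : (fun N : ℕ => ((2*m / N + c (N - 2*m) : ℝ) : EReal)) =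
      (fun N : ℕ => ((2*m / N : ℝ) : EReal)) + (fun N : ℕ => ((c (N - 2*m) : ℝ) : EReal)) := by
    funext N
    simp [EReal.coe_add]
  rw [hsplit]
  have hA : Filter.limsup (fun N : ℕ => ((2*m / N : ℝ) : EReal)) Filter.atTop = 0 := by
    apply Filter.Tendsto.limsup_eq
    have h0 : Filter.Tendsto (fun N : ℕ => (2*m / N : ℝ)) Filter.atTop (nhds 0) :=
      tendsto_const_div_atTop_nhds_zero_nat _
    have := (continuous_coe_real_ereal.tendsto 0).comp h0
    exact this
  have hB : Filter.limsup (fun N : ℕ => ((c (N - 2*m) : ℝ) : EReal)) Filter.atTop ≤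
      Filter.limsup (fun n : ℕ => ((c n : ℝ) : EReal)) Filter.atTop := by
    have heq : (fun N : ℕ => ((c (N - 2*m) : ℝ) : EReal)) =
        (fun n : ℕ => ((c n : ℝ) : EReal)) ∘ (fun N => N - 2*m) := rfl
    rw [heq, Filter.limsup_comp]
    exact Filter.limsup_le_limsup_of_le (Filter.tendsto_sub_atTop_nat (2*m))
  calc Filter.limsup ((fun N : ℕ => ((2*m / N : ℝ) : EReal)) +
        (fun N : ℕ => ((c (N - 2*m) : ℝ) : EReal))) Filter.atTop
      ≤ Filter.limsup (fun N : ℕ => ((2*m / N : ℝ) : EReal)) Filter.atTop +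
        Filter.limsup (fun N : ℕ => ((c (N - 2*m) : ℝ) : EReal)) Filter.atTop := by
        apply EReal.limsup_add_le
        · left; rw [hA]; simp
        · left; rw [hA]; simp
    _ ≤ 0 + Filter.limsup (fun n : ℕ => ((c n : ℝ) : EReal)) Filter.atTop := by
        rw [hA]; exact add_le_add_right hB 0
    _ = Filter.limsup (fun n : ℕ => ((c n : ℝ) : EReal)) Filter.atTop := by
        rw [zero_add]
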